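/- An arrangement of $m$ hyperplanes in $\mathbb{R}^D$ partitions $\mathbb{R}^D$ into at most $\sum_{j=0}^{D} \binom{m}{j}$ connected regions (cells of the complement of the union of the hyperplanes). -/

import Mathlib

open Metric

private def Ok {E : Type*} [AddCommGroup E] [Module ℝ E] {m : ℕ}
    (f : Fin m → E →ₗ[ℝ] ℝ) (c : Fin m → ℝ) (s : Fin m → Bool) (x : E) : Prop :=
  ∀ i, if s i then c i < f i x else f i x < c i

private lemma pascal_sum (m D : ℕ) :
    ∑ j ∈ Finset.range (D + 1), (m + 1).choose j
      = ∑ j ∈ Finset.range (D + 1), m.choose j + ∑ j ∈ Finset.range D, m.choose j := by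
  induction D with
  | zero => simp
  | succ D ih =>
    rw [Finset.sum_range_succ (f := fun j => (m + 1).choose j),
      Finset.sum_range_succ (f := fun j => m.choose j) (n := D + 1),
      Finset.sum_range_succ (f := fun j => m.choose j) (n := D), ih,
      Nat.choose_succ_succ]
    rw [Finset.sum_range_succ (f := fun j => m.choose j) (n := D)]
    simp only [Nat.succ_eq_add_one]
    omega

private lemma ok_convex {E : Type*} [AddCommGroup E] [Module ℝ E] {m : ℕ}
    (f : Fin m → E →ₗ[ℝ] ℝ) (c : Fin m → ℝ) (s : Fin m → Bool) :
    Convex ℝ {x | Ok f c s x} := by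
  have h : {x | Ok f c s x} = ⋂ i, {x | if s i then c i < f i x else f i x < c i} := by
    ext x; simp [Ok, Set.mem_iInter]
  rw [h]
  apply convex_iInter
  intro i
  cases hb : s i
  · simp only [hb, Bool.false_eq_true, if_false]
    exact convex_halfSpace_lt (f i).isLinear _
  · simp only [hb, if_true]
    exact convex_halfSpace_gt (f i).isLinear _

private lemma count_signs (m : ℕ) :
    ∀ (E : Type) [AddCommGroup E] [Module ℝ E] [FiniteDimensional ℝ E]
      (f : Fin m → E →ₗ[ℝ] ℝ) (c : Fin m → ℝ),
      {s : Fin m → Bool | ∃ x, Ok f c s x}.ncard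
        ≤ ∑ j ∈ Finset.range (Module.finrank ℝ E + 1), m.choose j := by
  induction m with
  | zero =>
    intro E _ _ _ f c
    calc {s : Fin 0 → Bool | ∃ x, Ok f c s x}.ncard
        ≤ (Set.univ : Set (Fin 0 → Bool)).ncard :=
          Set.ncard_le_ncard (Set.subset_univ _) (Set.toFinite _)
      _ = 1 := by rw [Set.ncard_univ]; simp
      _ = Nat.choose 0 0 := rfl
      _ ≤ ∑ j ∈ Finset.range (Module.finrank ℝ E + 1), Nat.choose 0 j :=
          Finset.single_le_sum (fun _ _ => Nat.zero_le _)
            (Finset.mem_range.mpr (Nat.succ_pos _))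
  | succ m ih =>
    intro E _ _ _ f c
    classical
    set l : Fin (m + 1) := Fin.last m with hl
    set res : (Fin (m + 1) → Bool) → (Fin m → Bool) := fun s i => s i.castSucc with hres
    set S : Set (Fin (m + 1) → Bool) := {s | ∃ x, Ok f c s x} with hS
    set Sp : Set (Fin (m + 1) → Bool) := {s | (∃ x, Ok f c s x) ∧ s l = true} with hSp
    set Sn : Set (Fin (m + 1) → Bool) := {s | (∃ x, Ok f c s x) ∧ s l = false} with hSn
    set T : Set (Fin m → Bool) :=
      {s | ∃ x, Ok (fun i => f i.castSucc) (fun i => c i.castSucc) s x} with hT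
    have hinjp : Set.InjOn res Sp := by
      intro s1 h1 s2 h2 h12
      rw [hSp] at h1 h2
      funext i
      refine Fin.lastCases ?_ ?_ i
      · rw [h1.2, h2.2]
      · intro j; exact congrFun h12 j
    have hinjn : Set.InjOn res Sn := by
      intro s1 h1 s2 h2 h12
      rw [hSn] at h1 h2
      funext i
      refine Fin.lastCases ?_ ?_ i
      · rw [h1.2, h2.2]
      · intro j; exact congrFun h12 j
    have himgp : res '' Sp ⊆ T := by
      rintro _ ⟨s, hs, rfl⟩
      rw [hSp] at hs
      obtain ⟨⟨x, hx⟩, -⟩ := hs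
      exact ⟨x, fun i => hx i.castSucc⟩
    have himgn : res '' Sn ⊆ T := by
      rintro _ ⟨s, hs, rfl⟩
      rw [hSn] at hs
      obtain ⟨⟨x, hx⟩, -⟩ := hs
      exact ⟨x, fun i => hx i.castSucc⟩
    have hScover : S ⊆ Sp ∪ Sn := by
      intro s hs
      rcases Bool.eq_false_or_eq_true (s l) with h | h
      · exact Or.inl ⟨hs, h⟩
      · exact Or.inr ⟨hs, h⟩
    have h1 : S.ncard ≤ Sp.ncard + Sn.ncard :=
      le_trans (Set.ncard_le_ncard hScover (Set.toFinite _)) (Set.ncard_union_le _ _)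
    have h2 : Sp.ncard + Sn.ncard
        = ((res '' Sp) ∪ (res '' Sn)).ncard + ((res '' Sp) ∩ (res '' Sn)).ncard := by
      rw [Set.ncard_union_add_ncard_inter, Set.ncard_image_of_injOn hinjp,
        Set.ncard_image_of_injOn hinjn]
    have h3 : ((res '' Sp) ∪ (res '' Sn)).ncard ≤ T.ncard :=
      Set.ncard_le_ncard (Set.union_subset himgp himgn) (Set.toFinite _)
    have h4 : T.ncard ≤ ∑ j ∈ Finset.range (Module.finrank ℝ E + 1), m.choose j :=
      ih E _ _
    by_cases hf : f l = 0
    · have hW : (res '' Sp) ∩ (res '' Sn) = ∅ := by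
        ext s'
        simp only [Set.mem_inter_iff, Set.mem_empty_iff_false, iff_false, not_and]
        rintro ⟨s1, hs1, rfl⟩ ⟨s2, hs2, h12⟩
        rw [hSp] at hs1; rw [hSn] at hs2
        obtain ⟨⟨x, hx⟩, hb1⟩ := hs1
        obtain ⟨⟨y, hy⟩, hb2⟩ := hs2
        have hxl := hx l; have hyl := hy l
        rw [hb1] at hxl; rw [hb2] at hyl
        rw [if_pos rfl] at hxl
        rw [if_neg (by simp)] at hyl
        rw [hf] at hxl hyl
        simp only [LinearMap.zero_apply] at hxl hyl
        linarith
      calc S.ncard ≤ Sp.ncard + Sn.ncard := h1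
        _ = ((res '' Sp) ∪ (res '' Sn)).ncard + ((res '' Sp) ∩ (res '' Sn)).ncard := h2
        _ = ((res '' Sp) ∪ (res '' Sn)).ncard := by rw [hW, Set.ncard_empty, add_zero]
        _ ≤ T.ncard := h3
        _ ≤ ∑ j ∈ Finset.range (Module.finrank ℝ E + 1), m.choose j := h4
        _ ≤ ∑ j ∈ Finset.range (Module.finrank ℝ E + 1), (m + 1).choose j :=
            Finset.sum_le_sum fun j _ => Nat.choose_le_choose j (Nat.le_succ m)
    · obtain ⟨v, hv⟩ : ∃ v, f l v ≠ 0 := by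
        by_contra h; push_neg at h; exact hf (LinearMap.ext h)
      obtain ⟨p, hplp⟩ : ∃ p, f l p = c l :=
        ⟨(c l / f l v) • v, by rw [map_smul, smul_eq_mul, div_mul_cancel₀ _ hv]⟩
      have hrange : LinearMap.range (f l) = ⊤ := by
        rw [LinearMap.range_eq_top]
        intro r; exact ⟨(r / f l v) • v, by rw [map_smul, smul_eq_mul, div_mul_cancel₀ _ hv]⟩
      have hker : Module.finrank ℝ (LinearMap.ker (f l)) + 1 = Module.finrank ℝ E := by
        have h := LinearMap.finrank_range_add_finrank_ker (f l)
        rw [hrange, finrank_top, Module.finrank_self] at h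
        omega
      set K := LinearMap.ker (f l) with hK
      set f' : Fin m → K →ₗ[ℝ] ℝ := fun i => (f i.castSucc).comp K.subtype with hf'
      set c' : Fin m → ℝ := fun i => c i.castSucc - f i.castSucc p with hc'
      have hWsub : (res '' Sp) ∩ (res '' Sn) ⊆ {s' : Fin m → Bool | ∃ w, Ok f' c' s' w} := by
        rintro s' ⟨⟨s1, hs1, hr1⟩, ⟨s2, hs2, hr2⟩⟩
        rw [hSp] at hs1; rw [hSn] at hs2
        obtain ⟨⟨x, hx⟩, hb1⟩ := hs1
        obtain ⟨⟨y, hy⟩, hb2⟩ := hs2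
        have hxl : c l < f l x := by
          have h := hx l; rw [hb1, if_pos rfl] at h; exact h
        have hyl : f l y < c l := by
          have h := hy l; rw [hb2, if_neg (by simp)] at h; exact h
        set t : ℝ := f l x - c l with ht'
        set u : ℝ := c l - f l y with hu'
        have ht : 0 < t := by rw [ht']; linarith
        have hu : 0 < u := by rw [hu']; linarith
        have htu : 0 < t + u := by linarith
        set z : E := (t + u)⁻¹ • (u • x + t • y) with hz
        have hgz : ∀ g : E →ₗ[ℝ] ℝ, g z = (u * g x + t * g y) / (t + u) := by
          intro g
          rw [hz, map_smul, map_add, map_smul, map_smul]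
          simp only [smul_eq_mul]
          ring
        have hzl : f l z = c l := by
          rw [hgz, div_eq_iff (ne_of_gt htu), ht', hu']
          ring
        have hzK : z - p ∈ K := by
          rw [hK, LinearMap.mem_ker, map_sub, hzl, hplp, sub_self]
        refine ⟨⟨z - p, hzK⟩, ?_⟩
        intro i
        have hsx := hx i.castSucc
        have hsy := hy i.castSucc
        rw [show s1 i.castSucc = s' i from congrFun hr1 i] at hsx
        rw [show s2 i.castSucc = s' i from congrFun hr2 i] at hsy
        have hw : f' i ⟨z - p, hzK⟩ = f i.castSucc z - f i.castSucc p := by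
          rw [hf']; simp [map_sub]
        have hc'i : c' i = c i.castSucc - f i.castSucc p := rfl
        have hmid := hgz (f i.castSucc)
        by_cases hb : s' i = true
        · rw [if_pos hb] at hsx hsy
          rw [if_pos hb, hw, hc'i]
          have hlt : c i.castSucc < f i.castSucc z := by
            rw [hmid, lt_div_iff₀ htu]; nlinarith
          exact sub_lt_sub_right hlt _
        · rw [if_neg hb] at hsx hsy
          rw [if_neg hb, hw, hc'i]
          have hlt : f i.castSucc z < c i.castSucc := by
            rw [hmid, div_lt_iff₀ htu]; nlinarith
          exact sub_lt_sub_right hlt _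
      have hWcard : ((res '' Sp) ∩ (res '' Sn)).ncard
          ≤ ∑ j ∈ Finset.range (Module.finrank ℝ E), m.choose j := by
        have h := le_trans (Set.ncard_le_ncard hWsub (Set.toFinite _)) (ih K f' c')
        rwa [hker] at h
      calc S.ncard ≤ Sp.ncard + Sn.ncard := h1
        _ = ((res '' Sp) ∪ (res '' Sn)).ncard + ((res '' Sp) ∩ (res '' Sn)).ncard := h2
        _ ≤ ∑ j ∈ Finset.range (Module.finrank ℝ E + 1), m.choose j
              + ∑ j ∈ Finset.range (Module.finrank ℝ E), m.choose j :=
            Nat.add_le_add (h3.trans h4) hWcard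
        _ = ∑ j ∈ Finset.range (Module.finrank ℝ E + 1), (m + 1).choose j :=
            (pascal_sum m _).symm

/-- an arrangement of m hyperplanes in ℝ^D has at most
∑_{j=0}^{D} C(m,j) connected regions (connected components of the complement). -/
theorem hyperplane_arrangement_cells (D m : ℕ)
    (a : Fin m → EuclideanSpace ℝ (Fin D)) (c : Fin m → ℝ) (ha : ∀ i, a i ≠ 0) :
    {C : Set (EuclideanSpace ℝ (Fin D)) |
        ∃ z, z ∈ (⋃ i, {y : EuclideanSpace ℝ (Fin D) | inner ℝ (a i) y = (c i : ℝ)})ᶜ ∧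
          C = connectedComponentIn
              ((⋃ i, {y : EuclideanSpace ℝ (Fin D) | inner ℝ (a i) y = (c i : ℝ)})ᶜ) z}.ncard
      ≤ ∑ j ∈ Finset.range (D + 1), m.choose j := by
  classical
  set X := (⋃ i, {y : EuclideanSpace ℝ (Fin D) | inner ℝ (a i) y = (c i : ℝ)})ᶜ with hX
  set f : Fin m → EuclideanSpace ℝ (Fin D) →ₗ[ℝ] ℝ :=
    fun i => (innerSL ℝ (a i)).toLinearMap with hf
  have hfapp : ∀ i y, f i y = inner ℝ (a i) y := fun i y => rfl
  have hmemX : ∀ y, y ∈ X ↔ ∀ i, f i y ≠ c i := by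
    intro y
    rw [hX]
    simp only [Set.mem_compl_iff, Set.mem_iUnion, Set.mem_setOf_eq, not_exists]
    constructor
    · intro h i; rw [hfapp]; exact h i
    · intro h i hi; exact h i (by rw [hfapp]; exact hi)
  have hsub : {C : Set (EuclideanSpace ℝ (Fin D)) |
        ∃ z, z ∈ X ∧ C = connectedComponentIn X z}
      ⊆ (fun s => {y | Ok f c s y}) '' {s : Fin m → Bool | ∃ x, Ok f c s x} := by
    rintro C ⟨z, hz, rfl⟩
    have hzok : Ok f c (fun i => decide (c i < f i z)) z := by
      intro i
      have hne := (hmemX z).1 hz i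
      by_cases h : c i < f i z
      · rw [if_pos (decide_eq_true h)]; exact h
      · rw [if_neg (by simp [h])]
        exact lt_of_le_of_ne (le_of_not_gt h) hne
    refine ⟨fun i => decide (c i < f i z), ⟨z, hzok⟩, ?_⟩
    have hcellX : {y | Ok f c (fun i => decide (c i < f i z)) y} ⊆ X := by
      intro y hy
      rw [hmemX]
      intro i
      have h := hy i
      by_cases hb : decide (c i < f i z) = true
      · rw [if_pos hb] at h; exact ne_of_gt h
      · rw [if_neg hb] at h; exact ne_of_lt h
    refine Set.Subset.antisymm ?_ ?_
    · -- cell ⊆ component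
      exact IsPreconnected.subset_connectedComponentIn
        ((ok_convex f c _).isPreconnected) hzok hcellX
    · -- component ⊆ cell
      intro y hy i
      have hyX : y ∈ X := connectedComponentIn_subset X z hy
      have hyne := (hmemX y).1 hyX i
      have hzmem : z ∈ connectedComponentIn X z := mem_connectedComponentIn hz
      have hcont : ContinuousOn (fun w => f i w) (connectedComponentIn X z) :=
        (innerSL ℝ (a i)).continuous.continuousOn
      by_cases h : c i < f i z
      · rw [if_pos (decide_eq_true h)]
        by_contra hc
        have hc' : f i y < c i := lt_of_le_of_ne (le_of_not_gt hc) hyne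
        obtain ⟨w, hw, hweq⟩ :=
          (isPreconnected_connectedComponentIn).intermediate_value hy hzmem hcont
            ⟨le_of_lt hc', le_of_lt h⟩
        exact (hmemX w).1 (connectedComponentIn_subset X z hw) i hweq
      · rw [if_neg (by simp [h])]
        have hz' : f i z < c i := lt_of_le_of_ne (le_of_not_gt h) ((hmemX z).1 hz i)
        by_contra hc
        have hc' : c i < f i y := lt_of_le_of_ne (le_of_not_gt hc) (Ne.symm hyne)
        obtain ⟨w, hw, hweq⟩ :=
          (isPreconnected_connectedComponentIn).intermediate_value hzmem hy hcont
            ⟨le_of_lt hz', le_of_lt hc'⟩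
        exact (hmemX w).1 (connectedComponentIn_subset X z hw) i hweq
  calc {C : Set (EuclideanSpace ℝ (Fin D)) |
        ∃ z, z ∈ X ∧ C = connectedComponentIn X z}.ncard
      ≤ ((fun s => {y | Ok f c s y}) '' {s : Fin m → Bool | ∃ x, Ok f c s x}).ncard :=
        Set.ncard_le_ncard hsub (Set.Finite.image _ (Set.toFinite _))
    _ ≤ {s : Fin m → Bool | ∃ x, Ok f c s x}.ncard := Set.ncard_image_le (Set.toFinite _)
    _ ≤ ∑ j ∈ Finset.range (Module.finrank ℝ (EuclideanSpace ℝ (Fin D)) + 1), m.choose j :=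
        count_signs m _ f c
    _ = ∑ j ∈ Finset.range (D + 1), m.choose j := by rw [finrank_euclideanSpace_fin]
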